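/- Let q ≥ 1 be an integer and let w : ℕ → ℝ be a nonnegative completely multiplicative function (w(1) = 1, w(mn) = w(m)w(n) for all m,n ≥ 1) which is summable, i.e. ∑_{a ≥ 1} w(a) < ∞. Then for every positive integer n with gcd(n,q) = 1, one has ∑_{a,b ≥ 1, n·a ≡ b (mod q)} w(a) w(b) ≥ w(n) · ∑_{a,b ≥ 1, a ≡ b (mod q)} w(a) w(b). -/

import Mathlib

theorem resonator_shift_inequality (q : ℕ) (hq : 1 ≤ q) (w : ℕ → ℝ)
    (hw0 : ∀ n, 0 ≤ w n) (hw1 : w 1 = 1)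
    (hmul : ∀ m n : ℕ, 1 ≤ m → 1 ≤ n → w (m * n) = w m * w n)
    (hsum : Summable w)
    (n : ℕ) (hn : 1 ≤ n) (hnq : Nat.Coprime n q) :
    w n * ∑' p : ℕ × ℕ,
        (if 1 ≤ p.1 ∧ 1 ≤ p.2 ∧ p.1 ≡ p.2 [MOD q] then w p.1 * w p.2 else 0) ≤
      ∑' p : ℕ × ℕ,
        (if 1 ≤ p.1 ∧ 1 ≤ p.2 ∧ n * p.1 ≡ p.2 [MOD q] then w p.1 * w p.2 else 0) := by
  set F : ℕ × ℕ → ℝ := fun p =>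
    if 1 ≤ p.1 ∧ 1 ≤ p.2 ∧ n * p.1 ≡ p.2 [MOD q] then w p.1 * w p.2 else 0 with hF
  set G : ℕ × ℕ → ℝ := fun p =>
    w n * (if 1 ≤ p.1 ∧ 1 ≤ p.2 ∧ p.1 ≡ p.2 [MOD q] then w p.1 * w p.2 else 0) with hG
  have hW : Summable (fun p : ℕ × ℕ => w p.1 * w p.2) := hsum.mul_of_nonneg hsum hw0 hw0
  have hFnn : ∀ p, 0 ≤ F p := by
    intro p; simp only [hF]; split
    · exact mul_nonneg (hw0 _) (hw0 _)
    · exact le_rfl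
  have hFs : Summable F := by
    refine hW.of_nonneg_of_le hFnn ?_
    intro p; simp only [hF]; split
    · exact le_rfl
    · exact mul_nonneg (hw0 _) (hw0 _)
  have hGs : Summable G := by
    refine (hW.of_nonneg_of_le ?_ ?_).mul_left (w n) <;> intro p <;> split
    · exact mul_nonneg (hw0 _) (hw0 _)
    · exact le_rfl
    · exact le_rfl
    · exact mul_nonneg (hw0 _) (hw0 _)
  rw [← tsum_mul_left]
  have he : Function.Injective (fun p : ℕ × ℕ => (p.1, n * p.2)) := by
    intro a b hab
    simp only [Prod.mk.injEq] at hab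
    exact Prod.ext hab.1 (Nat.eq_of_mul_eq_mul_left hn hab.2)
  refine Summable.tsum_le_tsum_of_inj _ he (fun c _ => hFnn c) ?_ hGs hFs
  rintro ⟨a, b⟩
  simp only [hF, hG]
  by_cases h : 1 ≤ a ∧ 1 ≤ b ∧ a ≡ b [MOD q]
  · rw [if_pos h, if_pos ⟨h.1, Nat.one_le_iff_ne_zero.2 (Nat.mul_ne_zero
      (Nat.one_le_iff_ne_zero.1 hn) (Nat.one_le_iff_ne_zero.1 h.2.1)),
      (h.2.2.mul_left n)⟩]
    rw [hmul n b hn h.2.1]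
    ring_nf
    exact le_rfl
  · rw [if_neg h, mul_zero]
    exact hFnn (a, n * b)
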